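/- arXiv:1812.01979 — 2 statements merged into one kernel-verified Lean document; each statement's English description precedes it below -/
import Mathlib

section
/- (Theorem 3.12.) If the pseudo-projective curvature tensor vanishes, i.e. P̄(X,Y)Z = 0 for all X, Y, Z ∈ V, then Ric(X,Y) = −2n(α₀² + β₀²)g(X,Y) for all X, Y ∈ V (Einstein) and scal = −2n(2n+1)(α₀² + β₀²). -/
open LinearMap

/-- The trace of the rank-one endomorphism `X ↦ f X • v` is `f v`. -/
lemma trace_smulRight_eq {V : Type*} [AddCommGroup V] [Module ℝ V] [FiniteDimensional ℝ V]
    (f : V →ₗ[ℝ] ℝ) (v : V) :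
    LinearMap.trace ℝ V (f.smulRight v) = f v := by
  have h : f.smulRight v = dualTensorHom ℝ V V (f ⊗ₜ v) := by
    ext x; simp [dualTensorHom_apply]
  rw [h, trace_eq_contract_apply]
  simp

/-- A `g`-skew endomorphism has trace zero. -/
lemma trace_skew_eq_zero {V : Type*} [AddCommGroup V] [Module ℝ V] [FiniteDimensional ℝ V]
    (g : LinearMap.BilinForm ℝ V) (hg : g.Nondegenerate)
    (φ : V →ₗ[ℝ] V) (h : ∀ X Y : V, g (φ X) Y = - g X (φ Y)) :
    LinearMap.trace ℝ V φ = 0 := by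
  set e := g.toDual hg with he
  have key : e.symm.conj (Module.Dual.transpose (R := ℝ) φ) + φ = 0 := by
    apply LinearMap.ext; intro X
    simp only [LinearMap.add_apply, LinearMap.zero_apply, LinearEquiv.conj_apply,
      LinearMap.comp_apply, LinearEquiv.coe_coe, LinearEquiv.symm_symm]
    have h1 : (Module.Dual.transpose (R := ℝ) φ) (e X) = e (-φ X) := by
      apply LinearMap.ext; intro Y
      show e X (φ Y) = e (-φ X) Y
      show g X (φ Y) = g (-φ X) Y
      rw [map_neg, LinearMap.neg_apply, h X Y, neg_neg]
    rw [h1, e.symm_apply_apply, neg_add_cancel]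
  have h2 := congrArg (LinearMap.trace ℝ V) key
  rw [map_add, map_zero, LinearMap.trace_conj', LinearMap.trace_transpose'] at h2
  linarith

/-- The Ricci tensor: `Ric R Y Z` is the trace of the linear map `X ↦ R X Y Z`. -/
noncomputable def Ric {V : Type*} [AddCommGroup V] [Module ℝ V]
    (R : V →ₗ[ℝ] V →ₗ[ℝ] V →ₗ[ℝ] V) (Y Z : V) : ℝ :=
  LinearMap.trace ℝ V ((LinearMap.applyₗ Z).comp (R.flip Y))

theorem stmt_15
    (n : ℕ) (hn : 1 ≤ n)
    (V : Type*) [AddCommGroup V] [Module ℝ V] [FiniteDimensional ℝ V]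
    (hdim : Module.finrank ℝ V = 2 * n + 1)
    (g : LinearMap.BilinForm ℝ V)
    (hg_symm : ∀ X Y : V, g X Y = g Y X)
    (hg_nondeg : g.Nondegenerate)
    (φ : V →ₗ[ℝ] V) (ξ : V) (η : V →ₗ[ℝ] ℝ)
    (hφξ : φ ξ = 0) (hηφ : ∀ X : V, η (φ X) = 0)
    (hηξ : η ξ = 1) (hφ2 : ∀ X : V, φ (φ X) = X - η X • ξ)
    (hgφ : ∀ X Y : V, g (φ X) (φ Y) = - g X Y + η X * η Y)
    (R : V →ₗ[ℝ] V →ₗ[ℝ] V →ₗ[ℝ] V)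
    (hR_a1 : ∀ X Y Z W : V, g (R X Y Z) W = - g (R Y X Z) W)
    (hR_a2 : ∀ X Y Z W : V, g (R X Y Z) W = - g (R X Y W) Z)
    (hR_pair : ∀ X Y Z W : V, g (R X Y Z) W = g (R Z W X) Y)
    (α₀ β₀ : ℝ) (dα dβ : V →ₗ[ℝ] ℝ)
    (hTPS : ∀ X Y : V, R X Y ξ =
      -((α₀ ^ 2 + β₀ ^ 2) • (η Y • X - η X • Y))
      - (2 * α₀ * β₀) • (η Y • φ X - η X • φ Y)
      - dα X • φ Y + dα Y • φ X + dβ Y • φ (φ X) - dβ X • φ (φ Y))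
    (Qop : V →ₗ[ℝ] V) (hQ : ∀ X Y : V, g (Qop X) Y = Ric R X Y)
    (scal : ℝ) (hscal : scal = LinearMap.trace ℝ V Qop)
    (A B : V) (hA : ∀ X : V, g A X = dα X) (hB : ∀ X : V, g B X = dβ X)
    (hgrad : φ A = -((2 * (n : ℝ) - 1) • B))
    (p q : ℝ) (hp : p ≠ 0) (hq : q ≠ 0)
    (Pbar : V → V → V → V)
    (hPbar : ∀ X Y Z : V, Pbar X Y Z = p • R X Y Z
      + q • (Ric R Y Z • X - Ric R X Z • Y)
      - ((p + 2 * (n : ℝ) * q) * scal / (2 * (n : ℝ) * (2 * (n : ℝ) + 1))) •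
        (g Y Z • X - g X Z • Y))
    (hflat : ∀ X Y Z : V, Pbar X Y Z = 0)
    :
    (∀ X Y : V, Ric R X Y = -(2 * (n : ℝ) * (α₀ ^ 2 + β₀ ^ 2)) * g X Y) ∧ scal = -(2 * (n : ℝ) * (2 * (n : ℝ) + 1) * (α₀ ^ 2 + β₀ ^ 2)) := by
  -- basic facts about g, η, ξ, φ
  have hgXξ : ∀ X : V, g X ξ = η X := by
    intro X
    have h := hgφ X ξ
    rw [hφξ, hηξ] at h
    simp only [map_zero] at h
    linarith
  have hgξX : ∀ X : V, g ξ X = η X := fun X => (hg_symm ξ X).trans (hgXξ X)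
  have hskew : ∀ X Y : V, g (φ X) Y = - g X (φ Y) := by
    intro X Y
    have h := hgφ X (φ Y)
    rw [hηφ Y, hφ2 Y] at h
    have h2 : g (φ X) (Y - η Y • ξ) = g (φ X) Y - η Y * g (φ X) ξ := by
      simp [map_sub, map_smul, smul_eq_mul]
    rw [h2, hgXξ (φ X), hηφ X] at h
    linarith
  have h2n1 : (2 * (n : ℝ) - 1) ≠ 0 := by
    have : (1 : ℝ) ≤ (n : ℝ) := by exact_mod_cast hn
    linarith
  have hηB : η B = 0 := by
    have h := congrArg η hgrad
    rw [hηφ A] at h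
    simp only [map_neg, map_smul, smul_eq_mul] at h
    have h5 : (2 * (n : ℝ) - 1) * η B = 0 := by linarith
    exact (mul_eq_zero.mp h5).resolve_left h2n1
  have hdβξ : dβ ξ = 0 := by
    rw [← hB ξ, hg_symm B ξ, hgξX B, hηB]
  -- trace of φ is zero
  have htrφ : LinearMap.trace ℝ V φ = 0 := trace_skew_eq_zero g hg_nondeg φ hskew
  -- the operator X ↦ R X ξ ξ
  have hM : ((LinearMap.applyₗ ξ).comp (R.flip ξ) : V →ₗ[ℝ] V) =
      (-(α₀ ^ 2 + β₀ ^ 2)) • ((LinearMap.id : V →ₗ[ℝ] V) - LinearMap.smulRight η ξ)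
        + (dα ξ - 2 * α₀ * β₀) • φ := by
    apply LinearMap.ext; intro X
    have h := hTPS X ξ
    rw [hφξ, hηξ, hdβξ] at h
    simp only [map_zero, smul_zero, one_smul, zero_smul, sub_zero, add_zero] at h
    simp only [LinearMap.comp_apply, LinearMap.flip_apply, LinearMap.applyₗ_apply_apply,
      LinearMap.add_apply, LinearMap.smul_apply, LinearMap.sub_apply, LinearMap.id_apply,
      LinearMap.smulRight_apply]
    rw [h]
    module
  have hr0 : Ric R ξ ξ = -(2 * (n : ℝ) * (α₀ ^ 2 + β₀ ^ 2)) := by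
    show LinearMap.trace ℝ V ((LinearMap.applyₗ ξ).comp (R.flip ξ)) = _
    rw [hM, map_add, map_smul, map_smul, map_sub, htrφ, trace_smulRight_eq,
      LinearMap.trace_id, hdim, hηξ]
    simp only [smul_eq_mul]
    push_cast
    ring
  -- scalar form of flatness
  have hFg : ∀ X Y Z W : V, 0 = p * g (R X Y Z) W
      + q * (Ric R Y Z * g X W - Ric R X Z * g Y W)
      - ((p + 2 * (n : ℝ) * q) * scal / (2 * (n : ℝ) * (2 * (n : ℝ) + 1)))
        * (g Y Z * g X W - g X Z * g Y W) := by
    intro X Y Z W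
    have h : (0 : V) = p • R X Y Z + q • (Ric R Y Z • X - Ric R X Z • Y)
        - ((p + 2 * (n : ℝ) * q) * scal / (2 * (n : ℝ) * (2 * (n : ℝ) + 1))) •
          (g Y Z • X - g X Z • Y) := by
      rw [← hflat X Y Z]; exact hPbar X Y Z
    have h2 := congrArg (fun v => g v W) h
    simp only [map_add, map_sub, map_smul, LinearMap.add_apply, LinearMap.sub_apply,
      LinearMap.smul_apply, smul_eq_mul, map_zero, LinearMap.zero_apply] at h2
    linear_combination h2
  -- the four-term Ricci identity
  have hE : ∀ X Y Z W : V, Ric R Y Z * g X W - Ric R X Z * g Y W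
      + Ric R Y W * g X Z - Ric R X W * g Y Z = 0 := by
    intro X Y Z W
    have e1 := hFg X Y Z W
    have e2 := hFg X Y W Z
    have e3 := hR_a2 X Y Z W
    have hqS : q * (Ric R Y Z * g X W - Ric R X Z * g Y W
        + Ric R Y W * g X Z - Ric R X W * g Y Z) = 0 := by
      linear_combination (-1 : ℝ) * e1 - e2 - p * e3
    exact (mul_eq_zero.mp hqS).resolve_left hq
  have hrξ : ∀ Y : V, Ric R Y ξ = Ric R ξ ξ * η Y := by
    intro Y
    have h := hE ξ Y ξ ξ
    rw [hgξX ξ, hgXξ Y, hηξ] at h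
    linarith
  -- pair-symmetry identity for Ric
  have hP : ∀ X Y Z W : V, Ric R Y Z * g X W - Ric R X Z * g Y W
      = Ric R W X * g Z Y - Ric R Z X * g W Y := by
    intro X Y Z W
    have e1 := hFg X Y Z W
    have e2 := hFg Z W X Y
    have e3 := hR_pair X Y Z W
    have hqS : q * ((Ric R Y Z * g X W - Ric R X Z * g Y W)
        - (Ric R W X * g Z Y - Ric R Z X * g W Y)) = 0 := by
      linear_combination (-1 : ℝ) * e1 + e2 - p * e3
        + ((p + 2 * (n : ℝ) * q) * scal / (2 * (n : ℝ) * (2 * (n : ℝ) + 1)))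
          * (g X W * hg_symm Y Z + g Z Y * hg_symm X W
            - g Y W * hg_symm X Z - g Z X * hg_symm Y W)
    have h5 := (mul_eq_zero.mp hqS).resolve_left hq
    linarith
  -- Ric Y Z = (Ric ξ Z - r₀ η Z) η Y + r₀ g Y Z
  have hrYZ : ∀ Y Z : V, Ric R Y Z
      = (Ric R ξ Z - Ric R ξ ξ * η Z) * η Y + Ric R ξ ξ * g Y Z := by
    intro Y Z
    have h := hE ξ Y Z ξ
    rw [hgξX ξ, hgXξ Y, hgξX Z, hηξ] at h
    have h1 := hrξ Y
    linear_combination h - η Z * h1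
  -- a pair (Y, W) with η Y * η W ≠ g Y W
  obtain ⟨Y₀, W₀, hYW⟩ : ∃ Y W : V, η Y * η W - g Y W ≠ 0 := by
    by_contra hcon
    push_neg at hcon
    have hall : ∀ w : V, ∃ cc : ℝ, cc • ξ = w := by
      intro w
      refine ⟨η w, ?_⟩
      have hv : ∀ m : V, g (η w • ξ - w) m = 0 := by
        intro m
        have h1 := hcon w m
        have h6 : g (η w • ξ - w) m = η w * η m - g w m := by
          simp [map_sub, map_smul, LinearMap.sub_apply, LinearMap.smul_apply,
            smul_eq_mul, hgξX m]
        rw [h6]; linarith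
      have h7 := hg_nondeg.1 _ hv
      rw [sub_eq_zero] at h7; exact h7
    have h1 : Module.finrank ℝ V ≤ 1 := finrank_le_one ξ hall
    rw [hdim] at h1
    omega
  have hs0 : ∀ Z : V, Ric R ξ Z = Ric R ξ ξ * η Z := by
    intro Z
    have h := hP ξ Y₀ Z W₀
    rw [hgξX W₀] at h
    have h1 := hrYZ Y₀ Z
    have h3 := hrξ W₀
    have h4 := hrξ Z
    have hkey : (Ric R ξ Z - Ric R ξ ξ * η Z) * (η Y₀ * η W₀ - g Y₀ W₀) = 0 := by
      linear_combination h - η W₀ * h1 + g Z Y₀ * h3 - g W₀ Y₀ * h4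
        + Ric R ξ ξ * η Z * hg_symm Y₀ W₀ + Ric R ξ ξ * η W₀ * hg_symm Z Y₀
    have h5 := (mul_eq_zero.mp hkey).resolve_right hYW
    linarith
  have hEinstein : ∀ X Y : V, Ric R X Y = -(2 * (n : ℝ) * (α₀ ^ 2 + β₀ ^ 2)) * g X Y := by
    intro X Y
    have h := hrYZ X Y
    rw [hs0 Y] at h
    rw [h, hr0]
    ring
  refine ⟨hEinstein, ?_⟩
  -- Qop = r₀ • id
  have hQid : Qop = (-(2 * (n : ℝ) * (α₀ ^ 2 + β₀ ^ 2))) • (LinearMap.id : V →ₗ[ℝ] V) := by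
    apply LinearMap.ext; intro X
    have hz : ∀ Y : V, g (Qop X - (-(2 * (n : ℝ) * (α₀ ^ 2 + β₀ ^ 2))) • X) Y = 0 := by
      intro Y
      have h1 := hQ X Y
      have h2 := hEinstein X Y
      simp only [map_sub, map_smul, LinearMap.sub_apply, LinearMap.smul_apply, smul_eq_mul]
      rw [h1, h2]; ring
    have h8 := hg_nondeg.1 _ hz
    simp only [LinearMap.smul_apply, LinearMap.id_apply]
    rw [← sub_eq_zero]
    exact h8
  rw [hscal, hQid, map_smul, LinearMap.trace_id, hdim]
  simp only [smul_eq_mul]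
  push_cast
  ring
end

section
/- (Theorem 3.15.) Let 𝐁(X,Y)Z denote the (1,3)-form of the PC-Bochner curvature tensor, determined by g(𝐁(X,Y)Z, W) = 𝐁(X,Y,Z,W). If Ric(𝐁(ξ,Y)Z, V) + Ric(Z, 𝐁(ξ,Y)V) = 0 for all Y, Z, V ∈ V, then (α₀² + β₀² − 1)·(Ric(Y,Z) + 2n(α₀² + β₀²)g(Y,Z)) = 0 for all Y, Z ∈ V; that is, either Ric(Y,Z) = −2n(α₀² + β₀²)g(Y,Z) for all Y, Z (Einstein, with scal = −2n(2n+1)(α₀² + β₀²)) or α₀² + β₀² = 1. -/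
lemma trace_smulRight' {V : Type*} [AddCommGroup V] [Module ℝ V] [FiniteDimensional ℝ V]
    (c : V →ₗ[ℝ] ℝ) (v : V) : LinearMap.trace ℝ V (c.smulRight v) = c v := by
  classical
  let b := Module.finBasis ℝ V
  rw [LinearMap.trace_eq_matrix_trace ℝ b, Matrix.trace]
  have : ∀ i, Matrix.diag (LinearMap.toMatrix b b (c.smulRight v)) i
      = c (b i) * b.repr v i := by
    intro i
    simp [Matrix.diag, LinearMap.toMatrix_apply, LinearMap.smulRight_apply]
  rw [Finset.sum_congr rfl fun i _ => this i]
  conv_rhs => rw [← b.sum_repr v]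
  rw [map_sum]
  simp [mul_comm]

lemma trace_skew' {V : Type*} [AddCommGroup V] [Module ℝ V] [FiniteDimensional ℝ V]
    (g : LinearMap.BilinForm ℝ V) (hsymm : ∀ X Y, g X Y = g Y X) (hnd : g.Nondegenerate)
    (φ : V →ₗ[ℝ] V) (hskew : ∀ X Y : V, g (φ X) Y = - g X (φ Y)) :
    LinearMap.trace ℝ V φ = 0 := by
  classical
  have hsym : g.IsSymm := ⟨fun x y => by simpa using hsymm x y⟩
  let b := Module.finBasis ℝ V
  let d := g.dualBasis hnd b
  have hb : g.dualBasis hnd d = b := LinearMap.BilinForm.dualBasis_dualBasis (B := g) hnd hsym b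
  have t1 : LinearMap.trace ℝ V φ = ∑ i, g (φ (d i)) (b i) := by
    rw [LinearMap.trace_eq_matrix_trace ℝ d, Matrix.trace]
    apply Finset.sum_congr rfl
    intro i _
    simp [Matrix.diag, LinearMap.toMatrix_apply, d,
      LinearMap.BilinForm.dualBasis_repr_apply]
  have t2 : LinearMap.trace ℝ V φ = ∑ i, g (φ (b i)) (d i) := by
    rw [LinearMap.trace_eq_matrix_trace ℝ b, Matrix.trace]
    apply Finset.sum_congr rfl
    intro i _
    have : b.repr (φ (b i)) i = g (φ (b i)) (d i) := by
      rw [show ∀ x : V, b.repr x i = (g.dualBasis hnd d).repr x i from fun x => by rw [hb],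
        LinearMap.BilinForm.dualBasis_repr_apply]
    simp [Matrix.diag, LinearMap.toMatrix_apply, this]
  have t3 : ∑ i, g (φ (b i)) (d i) = - ∑ i, g (φ (d i)) (b i) := by
    rw [← Finset.sum_neg_distrib]
    apply Finset.sum_congr rfl
    intro i _
    rw [hskew, hsymm]
  have := t2.trans t3
  rw [← t1] at this
  linarith

section RicLin

variable {V : Type*} [AddCommGroup V] [Module ℝ V]
variable (R : V →ₗ[ℝ] V →ₗ[ℝ] V →ₗ[ℝ] V)

lemma Ric_add_left (Y Y' Z : V) : Ric R (Y + Y') Z = Ric R Y Z + Ric R Y' Z := by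
  unfold Ric
  rw [map_add, LinearMap.comp_add, map_add]

lemma Ric_smul_left (a : ℝ) (Y Z : V) : Ric R (a • Y) Z = a * Ric R Y Z := by
  unfold Ric
  rw [map_smul, LinearMap.comp_smul, map_smul, smul_eq_mul]

lemma Ric_zero_left (Z : V) : Ric R 0 Z = 0 := by
  unfold Ric
  rw [map_zero, LinearMap.comp_zero, map_zero]

end RicLin

theorem stmt_18
    (n : ℕ) (hn : 1 ≤ n)
    (V : Type*) [AddCommGroup V] [Module ℝ V] [FiniteDimensional ℝ V]
    (hdim : Module.finrank ℝ V = 2 * n + 1)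
    (g : LinearMap.BilinForm ℝ V)
    (hg_symm : ∀ X Y : V, g X Y = g Y X)
    (hg_nondeg : g.Nondegenerate)
    (φ : V →ₗ[ℝ] V) (ξ : V) (η : V →ₗ[ℝ] ℝ)
    (hφξ : φ ξ = 0) (hηφ : ∀ X : V, η (φ X) = 0)
    (hηξ : η ξ = 1) (hφ2 : ∀ X : V, φ (φ X) = X - η X • ξ)
    (hgφ : ∀ X Y : V, g (φ X) (φ Y) = - g X Y + η X * η Y)
    (R : V →ₗ[ℝ] V →ₗ[ℝ] V →ₗ[ℝ] V)
    (hR_a1 : ∀ X Y Z W : V, g (R X Y Z) W = - g (R Y X Z) W)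
    (hR_a2 : ∀ X Y Z W : V, g (R X Y Z) W = - g (R X Y W) Z)
    (hR_pair : ∀ X Y Z W : V, g (R X Y Z) W = g (R Z W X) Y)
    (α₀ β₀ : ℝ) (dα dβ : V →ₗ[ℝ] ℝ)
    (hTPS : ∀ X Y : V, R X Y ξ =
      -((α₀ ^ 2 + β₀ ^ 2) • (η Y • X - η X • Y))
      - (2 * α₀ * β₀) • (η Y • φ X - η X • φ Y)
      - dα X • φ Y + dα Y • φ X + dβ Y • φ (φ X) - dβ X • φ (φ Y))
    (Qop : V →ₗ[ℝ] V) (hQ : ∀ X Y : V, g (Qop X) Y = Ric R X Y)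
    (scal : ℝ) (hscal : scal = LinearMap.trace ℝ V Qop)
    (A B : V) (hA : ∀ X : V, g A X = dα X) (hB : ∀ X : V, g B X = dβ X)
    (hgrad : φ A = -((2 * (n : ℝ) - 1) • B))
    (k : ℝ) (hk : k = -((scal - 2 * (n : ℝ)) / (2 * (n : ℝ) + 2)))
    (Bt : V → V → V → V → ℝ)
    (hBt : ∀ X Y Z W : V, Bt X Y Z W = g (R X Y Z) W
      + (1 / (2 * (n : ℝ) + 4)) * (Ric R X Z * g Y W - Ric R Y Z * g X W
        + Ric R Y W * g X Z - Ric R X W * g Y Z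
        + Ric R (φ X) Z * g Y (φ W) - Ric R (φ Y) Z * g X (φ W)
        + Ric R (φ Y) W * g X (φ Z) - Ric R (φ X) W * g Y (φ Z)
        + 2 * Ric R (φ X) Y * g Z (φ W) + 2 * Ric R (φ Z) W * g X (φ Y)
        - Ric R X Z * (η Y * η W) + Ric R Y Z * (η X * η W)
        - Ric R Y W * (η X * η Z) + Ric R X W * (η Y * η Z))
      + ((k - 4) / (2 * (n : ℝ) + 4)) * (g X Z * g Y W - g Y Z * g X W)
      - ((k + 2 * (n : ℝ)) / (2 * (n : ℝ) + 4)) * (g Y (φ W) * g X (φ Z)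
        - g X (φ W) * g Y (φ Z) + 2 * g X (φ Y) * g Z (φ W))
      - (k / (2 * (n : ℝ) + 4)) * (g X Z * (η Y * η W) - g Y Z * (η X * η W)
        + g Y W * (η X * η Z) - g X W * (η Y * η Z)))
    (B13 : V → V → V → V)
    (hB13 : ∀ X Y Z W : V, g (B13 X Y Z) W = Bt X Y Z W)
    (hcond : ∀ Y Z U : V, Ric R (B13 ξ Y Z) U + Ric R Z (B13 ξ Y U) = 0)
    :
    (∀ Y Z : V, (α₀ ^ 2 + β₀ ^ 2 - 1) *
        (Ric R Y Z + 2 * (n : ℝ) * (α₀ ^ 2 + β₀ ^ 2) * g Y Z) = 0) ∧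
    (((∀ Y Z : V, Ric R Y Z = -(2 * (n : ℝ) * (α₀ ^ 2 + β₀ ^ 2)) * g Y Z) ∧
        scal = -(2 * (n : ℝ) * (2 * (n : ℝ) + 1) * (α₀ ^ 2 + β₀ ^ 2))) ∨
      α₀ ^ 2 + β₀ ^ 2 = 1) := by
  set s : ℝ := α₀ ^ 2 + β₀ ^ 2 with hs_def
  set ab : ℝ := 2 * α₀ * β₀ with hab_def
  have hn1 : (1 : ℝ) ≤ (n : ℝ) := by exact_mod_cast hn
  have h2n4 : (2 * (n : ℝ) + 4) ≠ 0 := by linarith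
  have h2n1 : (2 * (n : ℝ) - 1) ≠ 0 := by linarith
  -- extensionality from nondegeneracy
  have ext_g : ∀ u v : V, (∀ W : V, g u W = g v W) → u = v := by
    intro u v h
    have h0 : ∀ W : V, g (u - v) W = 0 := by
      intro W; rw [map_sub, LinearMap.sub_apply, h W, sub_self]
    exact sub_eq_zero.mp (hg_nondeg.1 _ h0)
  -- η X = g X ξ
  have h_eta : ∀ X : V, g X ξ = η X := by
    intro X
    have h1 := hgφ X ξ
    rw [hφξ, hηξ] at h1
    simp only [map_zero, mul_one] at h1
    linarith
  have h_etag : ∀ X : V, g ξ X = η X := fun X => (hg_symm ξ X).trans (h_eta X)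
  -- φ is skew-adjoint
  have hskew : ∀ X Y : V, g (φ X) Y = - g X (φ Y) := by
    intro X Y
    have h1 := hgφ X (φ Y)
    rw [hφ2 Y, hηφ Y] at h1
    rw [map_sub, map_smul, smul_eq_mul, h_eta (φ X), hηφ X] at h1
    simp only [mul_zero, sub_zero] at h1
    linarith
  -- η B = 0
  have hηB : η B = 0 := by
    have h1 := congrArg η hgrad
    rw [hηφ, map_neg, map_smul, smul_eq_mul] at h1
    have h2 : (2 * (n : ℝ) - 1) * η B = 0 := by linarith
    exact (mul_eq_zero.mp h2).resolve_left h2n1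
  have hdβξ : dβ ξ = 0 := by rw [← hB ξ, h_eta B, hηB]
  -- dα ∘ φ = (2n-1) dβ
  have hdaφ : ∀ Z : V, dα (φ Z) = (2 * (n : ℝ) - 1) * dβ Z := by
    intro Z
    have h1 := hskew A Z
    rw [hgrad, map_neg, map_smul, LinearMap.neg_apply, LinearMap.smul_apply, smul_eq_mul,
      hB] at h1
    rw [← hA (φ Z)]
    linarith
  have hηA : η A = dα ξ := by rw [← hA ξ]; exact (h_eta A).symm
  -- trace of φ is zero
  have htrφ : LinearMap.trace ℝ V φ = 0 := trace_skew' g hg_symm hg_nondeg φ hskew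
  -- φ is not identically zero
  have hφne : ∃ Y : V, φ Y ≠ 0 := by
    by_contra h
    push_neg at h
    have hXeq : ∀ X : V, X = η X • ξ := by
      intro X
      have h1 := hφ2 X
      rw [h X, map_zero] at h1
      have := h1.symm
      rw [sub_eq_zero] at this
      exact this
    have hξne : ξ ≠ 0 := by
      intro h0; rw [h0, map_zero] at hηξ; exact one_ne_zero hηξ.symm
    have hsp : (⊤ : Submodule ℝ V) = Submodule.span ℝ {ξ} := by
      apply le_antisymm
      · intro X _
        rw [hXeq X]
        exact Submodule.smul_mem _ _ (Submodule.mem_span_singleton_self ξ)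
      · exact le_top
    have h1 : Module.finrank ℝ V = 1 := by
      rw [← finrank_top ℝ V, hsp, finrank_span_singleton hξne]
    rw [hdim] at h1
    omega
  -- dα ξ = 2 α β
  have hdaξ : dα ξ = ab := by
    have hkey0 : ∀ Y W : V, (ab - dα ξ) * g (φ Y) W = 0 := by
      intro Y W
      have v1 : ∀ Y : V, R ξ Y ξ = s • Y - (s * η Y) • ξ + (ab - dα ξ) • φ Y := by
        intro Y
        rw [hTPS ξ Y]
        rw [hφξ, hηξ, hdβξ]
        simp only [map_zero, smul_zero, zero_smul, sub_zero, one_smul]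
        module
      have e1 := hR_pair ξ Y ξ W
      rw [v1 Y, v1 W] at e1
      simp only [map_add, map_sub, map_smul, LinearMap.add_apply, LinearMap.sub_apply,
        LinearMap.smul_apply, smul_eq_mul, h_eta, h_etag] at e1
      rw [show g Y W = g W Y from hg_symm Y W,
        show g (φ W) Y = - g (φ Y) W from by rw [hskew W Y, hg_symm W (φ Y)]]
        at e1
      linear_combination e1 / 2
    obtain ⟨Y₀, hY₀⟩ := hφne
    have hW : ∃ W : V, g (φ Y₀) W ≠ 0 := by
      by_contra h
      push_neg at h
      exact hY₀ (hg_nondeg.1 _ h)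
    obtain ⟨W₀, hW₀⟩ := hW
    have := (mul_eq_zero.mp (hkey0 Y₀ W₀)).resolve_right hW₀
    linarith
  -- Ric(ξ, Z) = -2 n s η Z
  have hRic_xi : ∀ Z : V, Ric R ξ Z = -(2 * (n : ℝ)) * s * η Z := by
    intro Z
    have hmap : (LinearMap.applyₗ Z).comp (R.flip ξ) =
        ((s • (g Z) + ab • (g (φ Z)) - dβ Z • η).smulRight ξ)
        + ((dβ Z - s * η Z) • (LinearMap.id : V →ₗ[ℝ] V))
        + ((ab * η Z - dα Z) • φ)
        + ((η Z • η - g Z).smulRight B)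
        - (g (φ Z)).smulRight A := by
      apply LinearMap.ext; intro X
      apply ext_g; intro W
      have e1 : g (R X ξ Z) W = - g (R Z W ξ) X :=
        (hR_pair X ξ Z W).trans (hR_a2 Z W X ξ)
      have lhs1 : ((LinearMap.applyₗ Z).comp (R.flip ξ)) X = R X ξ Z := rfl
      rw [lhs1, e1, hTPS Z W, hφ2 Z, hφ2 W]
      simp only [map_add, map_sub, map_neg, map_smul, LinearMap.add_apply,
        LinearMap.sub_apply, LinearMap.neg_apply, LinearMap.smul_apply,
        LinearMap.smulRight_apply, LinearMap.id_apply, smul_eq_mul, h_eta, h_etag,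
        hA, hB]
      rw [show g X W = g W X from hg_symm X W,
        show g (φ X) W = - g (φ W) X from by rw [hskew X W, hg_symm X (φ W)]]
      ring
    rw [Ric, hmap]
    rw [map_sub, map_add, map_add, map_add, map_smul, map_smul,
      trace_smulRight', trace_smulRight', trace_smulRight',
      LinearMap.trace_id, htrφ, hdim]
    simp only [LinearMap.add_apply, LinearMap.sub_apply, LinearMap.smul_apply,
      smul_eq_mul]
    rw [h_eta Z, show g (φ Z) ξ = 0 from by rw [h_eta (φ Z), hηφ], hηξ,
      show g Z B = dβ Z from by rw [hg_symm Z B, hB], hηB,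
      show g (φ Z) A = (2 * (n : ℝ) - 1) * dβ Z from by
        rw [hg_symm (φ Z) A, hA, hdaφ]]
    push_cast
    ring
  set c : ℝ := (2 * (n : ℝ) * s + 4) / (2 * (n : ℝ) + 4) with hc_def
  -- explicit formula for B13 ξ Y Z
  have hB13xi : ∀ Y Z : V, B13 ξ Y Z =
      (-(s * g Z Y) - ab * g (φ Z) Y + dβ Z * η Y + c * g Y Z) • ξ
      + (s * η Z - dβ Z - c * η Z) • Y + (dα Z - ab * η Z) • φ Y
      + g (φ Z) Y • A + (g Z Y - η Z * η Y) • B := by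
    intro Y Z
    apply ext_g; intro W
    rw [hB13, hBt]
    rw [hR_pair ξ Y Z W, hTPS Z W, hφ2 Z, hφ2 W, hφξ]
    simp only [map_add, map_sub, map_neg, map_smul, map_zero,
      LinearMap.add_apply, LinearMap.sub_apply, LinearMap.neg_apply,
      LinearMap.smul_apply, LinearMap.zero_apply, smul_eq_mul,
      h_eta, h_etag, hηξ, hηφ, Ric_zero_left, hRic_xi]
    rw [show g Y W = g W Y from hg_symm Y W,
      show g (φ Y) W = - g (φ W) Y from by rw [hskew Y W, hg_symm Y (φ W)],
      show g B W = dβ W from hB W,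
      show g A W = dα W from hA W,
      show g Y Z = g Z Y from hg_symm Y Z]
    rw [hc_def]
    field_simp
    ring
  -- B13 ξ Y ξ
  have hTYξ : ∀ Y : V, B13 ξ Y ξ = ((c - s) * η Y) • ξ + (s - c) • Y := by
    intro Y
    rw [hB13xi Y ξ]
    rw [hφξ, hηξ, hdβξ, hdaξ, h_etag Y, h_eta Y]
    simp only [map_zero, LinearMap.zero_apply, mul_zero, zero_mul, mul_one, one_mul]
    module
  -- η (B13 ξ Y U)
  have hηT : ∀ Y U : V, η (B13 ξ Y U) = (c - s) * (g Y U - η U * η Y) := by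
    intro Y U
    rw [hB13xi Y U]
    simp only [map_add, map_smul, smul_eq_mul, hηξ, hηφ, hηB, hηA, hdaξ]
    rw [show g U Y = g Y U from hg_symm U Y]
    ring
  -- key identity
  have hkey : ∀ Y U : V, (s - 1) * (Ric R Y U + 2 * (n : ℝ) * s * g Y U) = 0 := by
    intro Y U
    have h0 := hcond Y ξ U
    rw [hTYξ Y, hRic_xi (B13 ξ Y U), hηT Y U,
      Ric_add_left, Ric_smul_left, Ric_smul_left, hRic_xi U] at h0
    have hsc : (2 * (n : ℝ) + 4) * (s - c) = 4 * (s - 1) := by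
      rw [hc_def]
      field_simp
      ring
    have h4 : 4 * ((s - 1) * (Ric R Y U + 2 * (n : ℝ) * s * g Y U)) = 0 := by
      linear_combination (2 * (n : ℝ) + 4) * h0
        - (Ric R Y U + 2 * (n : ℝ) * s * g Y U) * hsc
    linarith
  constructor
  · intro Y Z
    linear_combination hkey Y Z
  · by_cases hs1 : s = 1
    · right; exact hs1
    · left
      have hRicE : ∀ Y Z : V, Ric R Y Z = -(2 * (n : ℝ) * s) * g Y Z := by
        intro Y Z
        have h := hkey Y Z
        have h2 : Ric R Y Z + 2 * (n : ℝ) * s * g Y Z = 0 := by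
          rcases mul_eq_zero.mp h with h' | h'
          · exact absurd (by linarith : s = 1) hs1
          · exact h'
        linarith
      refine ⟨fun Y Z => hRicE Y Z, ?_⟩
      have hQid : Qop = (-(2 * (n : ℝ) * s)) • (LinearMap.id : V →ₗ[ℝ] V) := by
        apply LinearMap.ext; intro X
        apply ext_g; intro W
        rw [hQ, hRicE]
        simp only [LinearMap.smul_apply, LinearMap.id_apply, map_smul, smul_eq_mul]
      rw [hscal, hQid, map_smul, LinearMap.trace_id, hdim, smul_eq_mul]
      push_cast
      ring
end
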